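/- Let p : ℝ → ℝ be differentiable at ρ_R with derivative σ² (σ ≥ 0), and let ρ_R, u_R be reals with u_R ≠ 0. Set A = T⁰¹(ρ_R,p(ρ_R),u_R), B = T¹¹(ρ_R,p(ρ_R),u_R), and for u ≠ 0 define ρ̂(u) = −B + A/v(u) and Φ(u) = T¹¹(ρ̂(u), p(ρ̂(u)), u) − B. Then ρ̂(u_R) = ρ_R and Φ is differentiable at u_R with derivative Φ′(u_R) = ((v(u_R)² − σ²)/v(u_R)²)·(p(ρ_R) + ρ_R)·u_R. -/

import Mathlib

/-- Component `T⁰⁰` of the relativistic perfect-fluid energy–momentum tensor in one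
spatial dimension with 4-velocity `(√(1+u²), u)`. -/
noncomputable def T00 (ρ P u : ℝ) : ℝ := (P + ρ) * (1 + u ^ 2) - P

/-- Component `T⁰¹` of the relativistic perfect-fluid energy–momentum tensor. -/
noncomputable def T01 (ρ P u : ℝ) : ℝ := (P + ρ) * u * Real.sqrt (1 + u ^ 2)

/-- Component `T¹¹` of the relativistic perfect-fluid energy–momentum tensor. -/
noncomputable def T11 (ρ P u : ℝ) : ℝ := (P + ρ) * u ^ 2 + P

/-- The classical fluid velocity `v(u) = u/√(1+u²)`. -/
noncomputable def vel (u : ℝ) : ℝ := u / Real.sqrt (1 + u ^ 2)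

/-- Derivative of the right-hand side `Φ` of the standing-shock profile ODE at the right
state: `Φ′(u_R) = ((v(u_R)² − σ²)/v(u_R)²)·(p(ρ_R) + ρ_R)·u_R`. -/
theorem derivative_of_profile_rhs (p : ℝ → ℝ) (σ ρR uR : ℝ) (hσ : 0 ≤ σ)
    (hp : HasDerivAt p (σ ^ 2) ρR) (huR : uR ≠ 0) :
    let A : ℝ := T01 ρR (p ρR) uR
    let B : ℝ := T11 ρR (p ρR) uR
    let ρhat : ℝ → ℝ := fun u => -B + A / vel u
    let Φ : ℝ → ℝ := fun u => T11 (ρhat u) (p (ρhat u)) u - B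
    ρhat uR = ρR ∧
      HasDerivAt Φ (((vel uR) ^ 2 - σ ^ 2) / (vel uR) ^ 2 * (p ρR + ρR) * uR) uR := by
  intro A B ρhat Φ
  have hpos : (0:ℝ) < 1 + uR ^ 2 := by positivity
  set s : ℝ := Real.sqrt (1 + uR ^ 2) with hs_def
  have hs_pos : 0 < s := Real.sqrt_pos.mpr hpos
  have hs0 : s ≠ 0 := ne_of_gt hs_pos
  have hs2 : s ^ 2 = 1 + uR ^ 2 := Real.sq_sqrt (le_of_lt hpos)
  have hvne : vel uR ≠ 0 := div_ne_zero huR hs0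
  -- ρhat uR = ρR
  have hrho : ρhat uR = ρR := by
    show -B + A / vel uR = ρR
    simp only [A, B, T01, T11, vel, ← hs_def]
    field_simp
    linear_combination (p ρR + ρR) * hs2
  refine ⟨hrho, ?_⟩
  -- derivative of u ↦ 1 + u^2
  have h1 : HasDerivAt (fun u : ℝ => 1 + u ^ 2) (2 * uR) uR := by
    simpa using ((hasDerivAt_pow 2 uR).const_add 1)
  -- derivative of u ↦ √(1+u²)
  have hsq : HasDerivAt (fun u : ℝ => Real.sqrt (1 + u ^ 2)) (1 / (2 * s) * (2 * uR)) uR :=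
    (Real.hasDerivAt_sqrt (ne_of_gt hpos)).comp uR h1
  -- derivative of vel
  have hvel : HasDerivAt vel ((1 * s - uR * (1 / (2 * s) * (2 * uR))) / s ^ 2) uR := by
    have := (hasDerivAt_id uR).div hsq hs0
    exact this
  set dv : ℝ := (1 * s - uR * (1 / (2 * s) * (2 * uR))) / s ^ 2 with hdv
  -- derivative of ρhat
  have hρhat : HasDerivAt ρhat ((0 * vel uR - A * dv) / (vel uR) ^ 2) uR := by
    have := ((hasDerivAt_const uR A).div hvel hvne).const_add (-B)
    simpa [ρhat] using this
  set dρ : ℝ := (0 * vel uR - A * dv) / (vel uR) ^ 2 with hdρ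
  -- derivative of p ∘ ρhat
  have hp' : HasDerivAt p (σ ^ 2) (ρhat uR) := hrho ▸ hp
  have hpcomp : HasDerivAt (fun u => p (ρhat u)) (σ ^ 2 * dρ) uR := hp'.comp uR hρhat
  -- derivative of Φ
  have hΦ : HasDerivAt Φ
      ((σ ^ 2 * dρ + dρ) * uR ^ 2 + (p (ρhat uR) + ρhat uR) * (2 * uR ^ 1) + σ ^ 2 * dρ) uR := by
    have := (((hpcomp.add hρhat).mul (hasDerivAt_pow 2 uR)).add hpcomp).sub_const B
    simpa [Φ, T11] using this
  convert hΦ using 1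
  rw [hrho] at *
  have hvv : vel uR = uR / s := rfl
  simp only [hdρ, hdv, hvv, A, B, T01, T11]
  field_simp

  linear_combination (s*uR^2*(p ρR + ρR)*(σ^2+1)) * hs2
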